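/- Minimax guarantee for the TV-critic game, population minimizer: Let P be the true kernel and P̂* a candidate kernel on the same finite MDP (reward r with 0 ≤ r ≤ R_max, discount γ ∈ (0,1), initial distribution ρ₀), let Π be a nonempty set of stationary policies, and let d_data be a probability mass function on S × A satisfying κ-coverage for Π under P. Let 𝒟 be a nonempty set of functions D : S × A × S → [−1,1] and let ε_critic ≥ 0 satisfy, for every (s,a), 2·TV(P(·|s,a), P̂*(·|s,a)) ≤ sup_{D∈𝒟} Δ_{D,P̂*}(s,a) + ε_critic. If Σ_{(s,a)} d_data(s,a)·sup_{D∈𝒟} Δ_{D,P̂*}(s,a) ≤ ε_model, then for every π ∈ Π, |V_π(P) − V_π(P̂*)| ≤ (γ·R_max/(1−γ)) · κ · ( ε_model/2 + ε_critic/2 ). -/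

import Mathlib

open Finset Real

/-- `p` is a probability mass function on a finite type. -/
def IsPMF {X : Type*} [Fintype X] (p : X → ℝ) : Prop :=
  (∀ x, 0 ≤ p x) ∧ ∑ x, p x = 1

/-- `P` is a transition kernel: each `P s a` is a pmf on states. -/
def IsKernel {S A : Type*} [Fintype S] [Fintype A] (P : S → A → S → ℝ) : Prop :=
  ∀ s a, IsPMF (P s a)

/-- `pol` is a stationary policy: each `pol s` is a pmf on actions. -/
def IsPolicy {S A : Type*} [Fintype S] [Fintype A] (pol : S → A → ℝ) : Prop :=
  ∀ s, IsPMF (pol s)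

/-- `V` satisfies the Bellman evaluation equation for policy `pol` under kernel `P`,
reward `r` and discount `γ`. -/
def IsValue {S A : Type*} [Fintype S] [Fintype A] (P : S → A → S → ℝ) (pol : S → A → ℝ)
    (r : S → A → ℝ) (γ : ℝ) (V : S → ℝ) : Prop :=
  ∀ s, V s = ∑ a, pol s a * (r s a + γ * ∑ s', P s a s' * V s')

/-- `d` is the (unnormalized) discounted state-action occupancy of `pol` under kernel `P`
with initial distribution `ρ₀` and discount `γ`. -/
def IsOcc {S A : Type*} [Fintype S] [Fintype A] (P : S → A → S → ℝ) (pol : S → A → ℝ)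
    (ρ₀ : S → ℝ) (γ : ℝ) (d : S → A → ℝ) : Prop :=
  ∀ s a, d s a = pol s a * (ρ₀ s + γ * ∑ x : S × A, d x.1 x.2 * P x.1 x.2 s)

/-- ℓ₁ distance between two pmfs on a finite type. -/
noncomputable def l1Dist {X : Type*} [Fintype X] (p q : X → ℝ) : ℝ :=
  ∑ x, |p x - q x|

/-- Total variation distance between two pmfs on a finite type. -/
noncomputable def tvDist {X : Type*} [Fintype X] (p q : X → ℝ) : ℝ :=
  (1 / 2) * ∑ x, |p x - q x|

/-- Kullback-Leibler divergence between two pmfs on a finite type (finite under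
absolute continuity). -/
noncomputable def klF {X : Type*} [Fintype X] (p q : X → ℝ) : ℝ :=
  ∑ x, p x * Real.log (p x / q x)

/-- `d_data` satisfies κ-coverage for the policy set `Pol` under kernel `P`:
every occupancy of a policy in `Pol` is dominated by `κ · d_data`. -/
def KappaCoverage {S A : Type*} [Fintype S] [Fintype A] (P : S → A → S → ℝ) (ρ₀ : S → ℝ)
    (γ : ℝ) (Pol : Set (S → A → ℝ)) (ddata : S → A → ℝ) (κ : ℝ) : Prop :=
  ∀ pol ∈ Pol, ∀ dpol : S → A → ℝ, IsOcc P pol ρ₀ γ dpol → ∀ s a, dpol s a ≤ κ * ddata s a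

/-- Critic discrepancy `Δ_{D,P̂}(s,a)`. -/
noncomputable def critDelta {S A : Type*} [Fintype S] (P Phat : S → A → S → ℝ)
    (D : S → A → S → ℝ) (s : S) (a : A) : ℝ :=
  (∑ s', P s a s' * D s a s') - ∑ s', Phat s a s' * D s a s'

/-- Supremum over the critic class of the critic discrepancy at `(s,a)`. -/
noncomputable def critSup {S A : Type*} [Fintype S] (𝒟 : Set (S → A → S → ℝ))
    (P Phat : S → A → S → ℝ) (s : S) (a : A) : ℝ :=
  sSup {y | ∃ D ∈ 𝒟, y = critDelta P Phat D s a}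

section OccupancyHelpers

variable {S A : Type*} [Fintype S] [Fintype A]

private lemma key_sum (P : S → A → S → ℝ) (hP : IsKernel P)
    (p : S → A → ℝ) (hp : IsPolicy p) (γ : ℝ) (f : S × A → ℝ) :
    ∑ y : S × A, p y.1 y.2 * (γ * ∑ x : S × A, f x * P x.1 x.2 y.1)
      = γ * ∑ x : S × A, f x := by
  rw [Fintype.sum_prod_type]
  have h1 : ∀ s : S, ∑ a, p s a * (γ * ∑ x : S × A, f x * P x.1 x.2 s)
      = γ * ∑ x : S × A, f x * P x.1 x.2 s := by
    intro s
    rw [← Finset.sum_mul, (hp s).2, one_mul]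
  rw [Finset.sum_congr rfl fun s _ => h1 s, ← Finset.mul_sum, Finset.sum_comm]
  congr 1
  refine Finset.sum_congr rfl fun x _ => ?_
  rw [← Finset.mul_sum, (hP x.1 x.2).2, mul_one]

private lemma contraction (P : S → A → S → ℝ) (hP : IsKernel P)
    (p : S → A → ℝ) (hp : IsPolicy p) {γ : ℝ} (hγ0 : 0 ≤ γ) (hγ1 : γ < 1)
    (f : S × A → ℝ) (hf0 : ∀ y, 0 ≤ f y)
    (hle : ∀ y : S × A, f y ≤ p y.1 y.2 * (γ * ∑ x : S × A, f x * P x.1 x.2 y.1)) :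
    ∀ y, f y = 0 := by
  have hsum : ∑ y : S × A, f y ≤ γ * ∑ x : S × A, f x :=
    le_of_le_of_eq (Finset.sum_le_sum fun y _ => hle y) (key_sum P hP p hp γ f)
  have hnn : 0 ≤ ∑ y : S × A, f y := Finset.sum_nonneg fun y _ => hf0 y
  have h0 : ∑ y : S × A, f y = 0 := by nlinarith
  intro y
  exact (Finset.sum_eq_zero_iff_of_nonneg fun y _ => hf0 y).1 h0 y (Finset.mem_univ y)

private noncomputable def occT (P : S → A → S → ℝ) (p : S → A → ℝ) (γ : ℝ) :
    ((S × A) → ℝ) →ₗ[ℝ] ((S × A) → ℝ) where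
  toFun u := fun y => p y.1 y.2 * (γ * ∑ x : S × A, u x * P x.1 x.2 y.1)
  map_add' u v := by
    funext y
    simp only [Pi.add_apply, add_mul, Finset.sum_add_distrib]
    ring
  map_smul' c u := by
    funext y
    simp only [Pi.smul_apply, smul_eq_mul, RingHom.id_apply]
    rw [show (∑ x : S × A, c * u x * P x.1 x.2 y.1)
        = c * ∑ x : S × A, u x * P x.1 x.2 y.1 by
      rw [Finset.mul_sum]; exact Finset.sum_congr rfl fun x _ => by ring]
    ring

private lemma occT_apply (P : S → A → S → ℝ) (p : S → A → ℝ) (γ : ℝ)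
    (u : (S × A) → ℝ) (y : S × A) :
    occT P p γ u y = p y.1 y.2 * (γ * ∑ x : S × A, u x * P x.1 x.2 y.1) := rfl

private lemma exists_occ (P : S → A → S → ℝ) (hP : IsKernel P)
    (p : S → A → ℝ) (hp : IsPolicy p) (ρ₀ : S → ℝ) (hρ : IsPMF ρ₀)
    {γ : ℝ} (hγ0 : 0 < γ) (hγ1 : γ < 1) :
    ∃ d : S → A → ℝ, IsOcc P p ρ₀ γ d ∧ ∀ s a, 0 ≤ d s a := by
  classical
  have hinj : Function.Injective ((LinearMap.id : ((S × A) → ℝ) →ₗ[ℝ] ((S × A) → ℝ)) - occT P p γ) := by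
    rw [← LinearMap.ker_eq_bot, LinearMap.ker_eq_bot']
    intro u hu
    have hu' : ∀ y, u y = occT P p γ u y := by
      intro y
      have h : u - occT P p γ u = 0 := by
        simpa [LinearMap.sub_apply] using hu
      have h2 := congrFun h y
      simp only [Pi.sub_apply, Pi.zero_apply] at h2
      linarith
    have hzero : ∀ y : S × A, |u y| = 0 := by
      apply contraction P hP p hp hγ0.le hγ1 (fun y => |u y|) (fun y => abs_nonneg _)
      intro y
      rw [hu' y, occT_apply, abs_mul, abs_mul, abs_of_nonneg ((hp y.1).1 y.2),
        abs_of_nonneg hγ0.le]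
      refine mul_le_mul_of_nonneg_left (mul_le_mul_of_nonneg_left ?_ hγ0.le) ((hp y.1).1 y.2)
      refine (Finset.abs_sum_le_sum_abs _ _).trans (le_of_eq (Finset.sum_congr rfl fun x _ => ?_))
      rw [abs_mul, abs_of_nonneg ((hP x.1 x.2).1 y.1)]
    funext y
    simpa using abs_eq_zero.mp (hzero y)
  obtain ⟨d0, hd0⟩ := LinearMap.surjective_of_injective hinj
    (fun y : S × A => p y.1 y.2 * ρ₀ y.1)
  have hocc0 : ∀ y : S × A,
      d0 y = p y.1 y.2 * (ρ₀ y.1 + γ * ∑ x : S × A, d0 x * P x.1 x.2 y.1) := by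
    intro y
    have h := congrFun hd0 y
    simp only [LinearMap.sub_apply, LinearMap.id_apply, Pi.sub_apply, occT_apply] at h
    have h2 : d0 y = p y.1 y.2 * ρ₀ y.1
        + p y.1 y.2 * (γ * ∑ x : S × A, d0 x * P x.1 x.2 y.1) := by linarith
    rw [h2]; ring
  set f : S × A → ℝ := fun y => max (-(d0 y)) 0 with hfdef
  have hfnn : ∀ y, 0 ≤ f y := fun y => le_max_right _ _
  have hfle : ∀ y : S × A, f y ≤ p y.1 y.2 * (γ * ∑ x : S × A, f x * P x.1 x.2 y.1) := by
    intro y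
    have hSnn : 0 ≤ ∑ x : S × A, f x * P x.1 x.2 y.1 :=
      Finset.sum_nonneg fun x _ => mul_nonneg (hfnn x) ((hP x.1 x.2).1 y.1)
    have hpnn : 0 ≤ p y.1 y.2 := (hp y.1).1 y.2
    have hrhsnn : 0 ≤ p y.1 y.2 * (γ * ∑ x : S × A, f x * P x.1 x.2 y.1) :=
      mul_nonneg hpnn (mul_nonneg hγ0.le hSnn)
    have hsumle : -(∑ x : S × A, f x * P x.1 x.2 y.1)
        ≤ ∑ x : S × A, d0 x * P x.1 x.2 y.1 := by
      have h1 : ∀ x : S × A, -(f x * P x.1 x.2 y.1) ≤ d0 x * P x.1 x.2 y.1 := by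
        intro x
        have := mul_le_mul_of_nonneg_right
          (show -(f x) ≤ d0 x by
            have := le_max_left (-(d0 x)) 0
            simp only [hfdef] at *
            linarith) ((hP x.1 x.2).1 y.1)
        linarith [this]
      calc -(∑ x : S × A, f x * P x.1 x.2 y.1)
          = ∑ x : S × A, -(f x * P x.1 x.2 y.1) := by rw [← Finset.sum_neg_distrib]
        _ ≤ ∑ x : S × A, d0 x * P x.1 x.2 y.1 := Finset.sum_le_sum fun x _ => h1 x
    have hdge : -(d0 y) ≤ p y.1 y.2 * (γ * ∑ x : S × A, f x * P x.1 x.2 y.1) := by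
      have h2 := hocc0 y
      have hρnn : 0 ≤ ρ₀ y.1 := hρ.1 y.1
      have h3 : 0 ≤ (∑ x : S × A, d0 x * P x.1 x.2 y.1)
          + ∑ x : S × A, f x * P x.1 x.2 y.1 := by linarith
      nlinarith [mul_nonneg hpnn hρnn, mul_nonneg (mul_nonneg hpnn hγ0.le) h3]
    exact max_le hdge hrhsnn
  have hf0 := contraction P hP p hp hγ0.le hγ1 f hfnn hfle
  refine ⟨fun s a => d0 (s, a), fun s a => hocc0 (s, a), fun s a => ?_⟩
  have h1 := hf0 (s, a)
  have h2 : -(d0 (s, a)) ≤ f (s, a) := le_max_left _ _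
  linarith

private lemma value_bounds [Nonempty S] (Phat : S → A → S → ℝ) (hPhat : IsKernel Phat)
    (p : S → A → ℝ) (hp : IsPolicy p) (r : S → A → ℝ) (Rmax : ℝ)
    (hr : ∀ s a, 0 ≤ r s a ∧ r s a ≤ Rmax) {γ : ℝ} (hγ0 : 0 < γ) (hγ1 : γ < 1)
    (Vhat : S → ℝ) (hV : IsValue Phat p r γ Vhat) :
    ∀ s, 0 ≤ Vhat s ∧ Vhat s ≤ Rmax / (1 - γ) := by
  have h1γ : (0:ℝ) < 1 - γ := by linarith
  obtain ⟨s₀, -, hs₀⟩ := Finset.exists_max_image (Finset.univ : Finset S) Vhat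
    ⟨Classical.arbitrary S, Finset.mem_univ _⟩
  obtain ⟨s₁, -, hs₁⟩ := Finset.exists_min_image (Finset.univ : Finset S) Vhat
    ⟨Classical.arbitrary S, Finset.mem_univ _⟩
  have hmax : ∀ s, Vhat s ≤ Vhat s₀ := fun s => hs₀ s (Finset.mem_univ s)
  have hmin : ∀ s, Vhat s₁ ≤ Vhat s := fun s => hs₁ s (Finset.mem_univ s)
  have hub : Vhat s₀ ≤ Rmax + γ * Vhat s₀ := by
    conv_lhs => rw [hV s₀]
    have hterm : ∀ a, p s₀ a * (r s₀ a + γ * ∑ s', Phat s₀ a s' * Vhat s')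
        ≤ p s₀ a * (Rmax + γ * Vhat s₀) := by
      intro a
      refine mul_le_mul_of_nonneg_left ?_ ((hp s₀).1 a)
      have hPs : ∑ s', Phat s₀ a s' * Vhat s' ≤ Vhat s₀ := by
        calc ∑ s', Phat s₀ a s' * Vhat s'
            ≤ ∑ s', Phat s₀ a s' * Vhat s₀ :=
              Finset.sum_le_sum fun s' _ =>
                mul_le_mul_of_nonneg_left (hmax s') ((hPhat s₀ a).1 s')
          _ = Vhat s₀ := by rw [← Finset.sum_mul, (hPhat s₀ a).2, one_mul]
      have hra := (hr s₀ a).2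
      nlinarith [mul_le_mul_of_nonneg_left hPs hγ0.le]
    calc ∑ a, p s₀ a * (r s₀ a + γ * ∑ s', Phat s₀ a s' * Vhat s')
        ≤ ∑ a, p s₀ a * (Rmax + γ * Vhat s₀) := Finset.sum_le_sum fun a _ => hterm a
      _ = Rmax + γ * Vhat s₀ := by rw [← Finset.sum_mul, (hp s₀).2, one_mul]
  have hlb : γ * Vhat s₁ ≤ Vhat s₁ := by
    conv_rhs => rw [hV s₁]
    have hterm : ∀ a, p s₁ a * (γ * Vhat s₁)
        ≤ p s₁ a * (r s₁ a + γ * ∑ s', Phat s₁ a s' * Vhat s') := by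
      intro a
      refine mul_le_mul_of_nonneg_left ?_ ((hp s₁).1 a)
      have hPs : Vhat s₁ ≤ ∑ s', Phat s₁ a s' * Vhat s' := by
        calc Vhat s₁ = ∑ s', Phat s₁ a s' * Vhat s₁ := by
              rw [← Finset.sum_mul, (hPhat s₁ a).2, one_mul]
          _ ≤ ∑ s', Phat s₁ a s' * Vhat s' :=
              Finset.sum_le_sum fun s' _ =>
                mul_le_mul_of_nonneg_left (hmin s') ((hPhat s₁ a).1 s')
      nlinarith [(hr s₁ a).1, mul_le_mul_of_nonneg_left hPs hγ0.le]
    calc γ * Vhat s₁ = ∑ a, p s₁ a * (γ * Vhat s₁) := by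
          rw [← Finset.sum_mul, (hp s₁).2, one_mul]
      _ ≤ ∑ a, p s₁ a * (r s₁ a + γ * ∑ s', Phat s₁ a s' * Vhat s') :=
          Finset.sum_le_sum fun a _ => hterm a
  intro s
  constructor
  · have h0 : 0 ≤ Vhat s₁ := by nlinarith
    linarith [hmin s]
  · have h0 : Vhat s₀ ≤ Rmax / (1 - γ) := by rw [le_div_iff₀ h1γ]; nlinarith
    linarith [hmax s]

end OccupancyHelpers

/-- **Minimax guarantee for the TV-critic game (population minimizer).** If the
TV-critic game value of `Phat` is at most `εm` and the critic class approximates the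
`L∞` ball up to `εc`, then under κ-coverage the value gap of every policy in `Pol` is
bounded by `(γ Rmax/(1-γ)) κ (εm/2 + εc/2)`. -/
theorem tv_critic_population_minimizer
    {S A : Type*} [Fintype S] [Fintype A] [Nonempty S] [Nonempty A]
    (P Phat : S → A → S → ℝ) (hP : IsKernel P) (hPhat : IsKernel Phat)
    (r : S → A → ℝ) (Rmax : ℝ) (hr : ∀ s a, 0 ≤ r s a ∧ r s a ≤ Rmax)
    (γ : ℝ) (hγ0 : 0 < γ) (hγ1 : γ < 1)
    (ρ₀ : S → ℝ) (hρ : IsPMF ρ₀)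
    (Pol : Set (S → A → ℝ)) (hPolNe : Pol.Nonempty) (hPol : ∀ p ∈ Pol, IsPolicy p)
    (ddata : S → A → ℝ) (hdata : IsPMF (fun x : S × A => ddata x.1 x.2))
    (κ : ℝ) (hκ : 0 < κ)
    (hcov : KappaCoverage P ρ₀ γ Pol ddata κ)
    (𝒟 : Set (S → A → S → ℝ)) (h𝒟ne : 𝒟.Nonempty)
    (h𝒟bdd : ∀ D ∈ 𝒟, ∀ s a s', D s a s' ∈ Set.Icc (-1 : ℝ) 1)
    (εc : ℝ) (hεc : 0 ≤ εc)
    (hcritic : ∀ s a, 2 * tvDist (P s a) (Phat s a) ≤ critSup 𝒟 P Phat s a + εc)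
    (εm : ℝ)
    (hmodel : ∑ x : S × A, ddata x.1 x.2 * critSup 𝒟 P Phat x.1 x.2 ≤ εm) :
    ∀ p ∈ Pol, ∀ V Vhat : S → ℝ, IsValue P p r γ V → IsValue Phat p r γ Vhat →
      |(∑ s, ρ₀ s * V s) - ∑ s, ρ₀ s * Vhat s| ≤
        γ * Rmax / (1 - γ) * κ * (εm / 2 + εc / 2) := by
  intro p hpPol V Vhat hV hVhat
  classical
  have hpol := hPol p hpPol
  have h1γ : (0:ℝ) < 1 - γ := by linarith
  have hRmax : 0 ≤ Rmax := by
    obtain ⟨s⟩ := ‹Nonempty S›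
    obtain ⟨a⟩ := ‹Nonempty A›
    exact le_trans (hr s a).1 (hr s a).2
  obtain ⟨d, hdocc, hdnn⟩ := exists_occ P hP p hpol ρ₀ hρ hγ0 hγ1
  have hdlekd : ∀ s a, d s a ≤ κ * ddata s a := hcov p hpPol d hdocc
  have hddnn : ∀ y : S × A, 0 ≤ ddata y.1 y.2 := fun y => hdata.1 y
  set g : S → A → ℝ := fun s a =>
    γ * ((∑ s', P s a s' * Vhat s') - ∑ s', Phat s a s' * Vhat s') with hg
  set w : S → ℝ := fun s => V s - Vhat s with hwdef
  -- Bellman equation for the difference w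
  have hw : ∀ s, w s = ∑ a, p s a * (g s a + γ * ∑ s', P s a s' * w s') := by
    intro s
    simp only [hwdef, hg]
    rw [hV s, hVhat s, ← Finset.sum_sub_distrib]
    refine Finset.sum_congr rfl fun a _ => ?_
    have hsplit : ∑ s', P s a s' * (V s' - Vhat s')
        = ∑ s', P s a s' * V s' - ∑ s', P s a s' * Vhat s' := by
      rw [← Finset.sum_sub_distrib]
      exact Finset.sum_congr rfl fun s' _ => by ring
    rw [hsplit]
    ring
  -- the two ways of computing the cross term
  have way1 : ∑ y : S × A, d y.1 y.2 * (g y.1 y.2 + γ * ∑ s', P y.1 y.2 s' * w s')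
      = ∑ s, (ρ₀ s + γ * ∑ x : S × A, d x.1 x.2 * P x.1 x.2 s) * w s := by
    rw [Fintype.sum_prod_type]
    refine Finset.sum_congr rfl fun s _ => ?_
    have h1 : ∀ a : A, d s a * (g s a + γ * ∑ s', P s a s' * w s')
        = (ρ₀ s + γ * ∑ x : S × A, d x.1 x.2 * P x.1 x.2 s)
          * (p s a * (g s a + γ * ∑ s', P s a s' * w s')) := by
      intro a
      rw [hdocc s a]
      ring
    rw [Finset.sum_congr rfl fun a _ => h1 a, ← Finset.mul_sum, ← hw s]
  have way2 : ∑ y : S × A, d y.1 y.2 * (g y.1 y.2 + γ * ∑ s', P y.1 y.2 s' * w s')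
      = (∑ y : S × A, d y.1 y.2 * g y.1 y.2)
        + γ * ∑ s', (∑ x : S × A, d x.1 x.2 * P x.1 x.2 s') * w s' := by
    have h1 : ∀ y : S × A, d y.1 y.2 * (g y.1 y.2 + γ * ∑ s', P y.1 y.2 s' * w s')
        = d y.1 y.2 * g y.1 y.2 + γ * ∑ s', d y.1 y.2 * P y.1 y.2 s' * w s' := by
      intro y
      rw [mul_add]
      congr 1
      rw [mul_left_comm, Finset.mul_sum]
      congr 1
      exact Finset.sum_congr rfl fun s' _ => by ring
    rw [Finset.sum_congr rfl fun y _ => h1 y, Finset.sum_add_distrib]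
    congr 1
    rw [← Finset.mul_sum]
    congr 1
    rw [Finset.sum_comm]
    exact Finset.sum_congr rfl fun s' _ => by rw [← Finset.sum_mul]
  have hiden : ∑ s, ρ₀ s * w s = ∑ y : S × A, d y.1 y.2 * g y.1 y.2 := by
    have h12 := way1.symm.trans way2
    have hexp : ∑ s, (ρ₀ s + γ * ∑ x : S × A, d x.1 x.2 * P x.1 x.2 s) * w s
        = (∑ s, ρ₀ s * w s)
          + γ * ∑ s', (∑ x : S × A, d x.1 x.2 * P x.1 x.2 s') * w s' := by
      rw [Finset.mul_sum, ← Finset.sum_add_distrib]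
      exact Finset.sum_congr rfl fun s _ => by ring
    rw [hexp] at h12
    linarith
  -- bound on g via TV distance
  have hVb := value_bounds Phat hPhat p hpol r Rmax hr hγ0 hγ1 Vhat hVhat
  have hgb : ∀ s a, |g s a| ≤ γ * (Rmax / (1 - γ)) * tvDist (P s a) (Phat s a) := by
    intro s a
    set c := Rmax / (2 * (1 - γ)) with hc
    have hc0 : 0 ≤ c := div_nonneg hRmax (by linarith)
    have h2c : Rmax / (1 - γ) = 2 * c := by
      rw [hc]; field_simp
    have hdiff : (∑ s', P s a s' * Vhat s') - ∑ s', Phat s a s' * Vhat s'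
        = ∑ s', (P s a s' - Phat s a s') * (Vhat s' - c) := by
      have hexp : ∀ s' : S, (P s a s' - Phat s a s') * (Vhat s' - c)
          = (P s a s' * Vhat s' - Phat s a s' * Vhat s')
            - (c * P s a s' - c * Phat s a s') := fun s' => by ring
      rw [Finset.sum_congr rfl fun s' _ => hexp s', Finset.sum_sub_distrib,
        Finset.sum_sub_distrib, Finset.sum_sub_distrib, ← Finset.mul_sum, ← Finset.mul_sum,
        (hP s a).2, (hPhat s a).2]
      ring
    have habs : |∑ s', (P s a s' - Phat s a s') * (Vhat s' - c)|
        ≤ ∑ s', |P s a s' - Phat s a s'| * c := by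
      refine (Finset.abs_sum_le_sum_abs _ _).trans (Finset.sum_le_sum fun s' _ => ?_)
      rw [abs_mul]
      refine mul_le_mul_of_nonneg_left ?_ (abs_nonneg _)
      rw [abs_le]
      refine ⟨by linarith [(hVb s').1], by linarith [(hVb s').2, h2c.symm.le]⟩
    have hsum2 : ∑ s', |P s a s' - Phat s a s'| * c
        = c * (2 * tvDist (P s a) (Phat s a)) := by
      rw [tvDist, ← Finset.sum_mul]
      ring
    have hgval : |g s a| = γ * |∑ s', (P s a s' - Phat s a s') * (Vhat s' - c)| := by
      simp only [hg]
      rw [← hdiff, abs_mul, abs_of_nonneg hγ0.le]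
    rw [hgval, h2c]
    calc γ * |∑ s', (P s a s' - Phat s a s') * (Vhat s' - c)|
        ≤ γ * (c * (2 * tvDist (P s a) (Phat s a))) := by
          refine mul_le_mul_of_nonneg_left ?_ hγ0.le
          rw [← hsum2]; exact habs
      _ = γ * (2 * c) * tvDist (P s a) (Phat s a) := by ring
  -- final chain
  set C := γ * (Rmax / (1 - γ)) with hC
  have hC0 : 0 ≤ C := mul_nonneg hγ0.le (div_nonneg hRmax (by linarith))
  have step1 : |∑ y : S × A, d y.1 y.2 * g y.1 y.2|
      ≤ ∑ y : S × A, κ * ddata y.1 y.2 * (C * tvDist (P y.1 y.2) (Phat y.1 y.2)) := by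
    refine (Finset.abs_sum_le_sum_abs _ _).trans (Finset.sum_le_sum fun y _ => ?_)
    rw [abs_mul, abs_of_nonneg (hdnn y.1 y.2)]
    calc d y.1 y.2 * |g y.1 y.2|
        ≤ κ * ddata y.1 y.2 * |g y.1 y.2| :=
          mul_le_mul_of_nonneg_right (hdlekd y.1 y.2) (abs_nonneg _)
      _ ≤ κ * ddata y.1 y.2 * (C * tvDist (P y.1 y.2) (Phat y.1 y.2)) :=
          mul_le_mul_of_nonneg_left (hgb y.1 y.2)
            (mul_nonneg hκ.le (hddnn y))
  have hds1 : ∑ y : S × A, ddata y.1 y.2 = 1 := by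
    have := hdata.2
    simpa using this
  have step2 : ∑ y : S × A, κ * ddata y.1 y.2 * (C * tvDist (P y.1 y.2) (Phat y.1 y.2))
      ≤ κ * C * (εm / 2 + εc / 2) := by
    have h1 : ∀ y : S × A, κ * ddata y.1 y.2 * (C * tvDist (P y.1 y.2) (Phat y.1 y.2))
        = κ * C * (ddata y.1 y.2 * tvDist (P y.1 y.2) (Phat y.1 y.2)) := fun y => by ring
    rw [Finset.sum_congr rfl fun y _ => h1 y, ← Finset.mul_sum]
    refine mul_le_mul_of_nonneg_left ?_ (mul_nonneg hκ.le hC0)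
    have h2 : ∀ y : S × A, ddata y.1 y.2 * tvDist (P y.1 y.2) (Phat y.1 y.2)
        ≤ ddata y.1 y.2 * ((critSup 𝒟 P Phat y.1 y.2 + εc) / 2) := fun y =>
      mul_le_mul_of_nonneg_left (by linarith [hcritic y.1 y.2]) (hddnn y)
    refine (Finset.sum_le_sum fun y _ => h2 y).trans ?_
    have h3 : ∑ y : S × A, ddata y.1 y.2 * ((critSup 𝒟 P Phat y.1 y.2 + εc) / 2)
        = (∑ y : S × A, ddata y.1 y.2 * critSup 𝒟 P Phat y.1 y.2) / 2
          + εc / 2 * ∑ y : S × A, ddata y.1 y.2 := by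
      rw [Finset.sum_div, Finset.mul_sum, ← Finset.sum_add_distrib]
      exact Finset.sum_congr rfl fun y _ => by ring
    rw [h3, hds1]
    linarith [hmodel]
  have hsub : (∑ s, ρ₀ s * V s) - ∑ s, ρ₀ s * Vhat s = ∑ s, ρ₀ s * w s := by
    rw [← Finset.sum_sub_distrib]
    refine Finset.sum_congr rfl fun s _ => ?_
    simp only [hwdef]
    ring
  rw [hsub, hiden]
  calc |∑ y : S × A, d y.1 y.2 * g y.1 y.2|
      ≤ ∑ y : S × A, κ * ddata y.1 y.2 * (C * tvDist (P y.1 y.2) (Phat y.1 y.2)) := step1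
    _ ≤ κ * C * (εm / 2 + εc / 2) := step2
    _ = γ * Rmax / (1 - γ) * κ * (εm / 2 + εc / 2) := by rw [hC]; ring
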